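/- If K is a simply connected pathwise connected poset, then every C*-net bundle (A,j) over K is trivial: it is isomorphic to the constant net bundle with fibre A_a for any fixed a ∈ K, via the isomorphisms given by parallel transport along any choice of paths. -/

import Mathlib

/-- A 1-simplex in a poset: a support with two faces below it. -/
structure PosetSimplex (K : Type*) [PartialOrder K] where
  supp : K
  f0 : K
  f1 : K
  h0 : f0 ≤ supp
  h1 : f1 ≤ supp

/-- Paths in a poset: finite composable sequences of 1-simplices (with a trivial path). -/
inductive NetPath (K : Type*) [PartialOrder K] : K → K → Type _
  | nil (a : K) : NetPath K a a
  | cons {a o : K} (p : NetPath K a o) (b : PosetSimplex K) (h : b.f1 = o) :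
      NetPath K a b.f0

namespace NetPath

variable {K : Type*} [PartialOrder K]

/-- Concatenation of paths. -/
def comp : ∀ {a o e : K}, NetPath K a o → NetPath K o e → NetPath K a e
  | _, _, _, p, .nil _ => p
  | _, _, _, p, .cons q b h => .cons (p.comp q) b h

/-- The path consisting of a single 1-simplex, from its 1-face to its 0-face. -/
def single (b : PosetSimplex K) : NetPath K b.f1 b.f0 := .cons (.nil b.f1) b rfl

end NetPath

/-- The opposite of a 1-simplex. -/
def PosetSimplex.op {K : Type*} [PartialOrder K] (b : PosetSimplex K) : PosetSimplex K :=
  ⟨b.supp, b.f1, b.f0, b.h1, b.h0⟩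

/-- The reverse (opposite) of a path. -/
def NetPath.reverse {K : Type*} [PartialOrder K] : ∀ {a o : K}, NetPath K a o → NetPath K o a
  | _, _, .nil a => .nil a
  | a, _, .cons p b h =>
      (NetPath.single ⟨b.supp, b.f1, b.f0, b.h1, b.h0⟩).comp
        ((h.symm ▸ p.reverse : NetPath K b.f1 a))

/-- Homotopy of paths in a poset: the equivalence relation generated by elementary moves
(replacing a 1-simplex by a composable decomposition through simplices with smaller support)
and cancellation of a 1-simplex with its opposite, compatible with concatenation. -/
inductive PathHomotopic (K : Type*) [PartialOrder K] :
    ∀ {a o : K}, NetPath K a o → NetPath K a o → Prop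
  | refl {a o : K} (p : NetPath K a o) : PathHomotopic K p p
  | symm {a o : K} {p q : NetPath K a o} : PathHomotopic K p q → PathHomotopic K q p
  | trans {a o : K} {p q r : NetPath K a o} :
      PathHomotopic K p q → PathHomotopic K q r → PathHomotopic K p r
  | comp {a o e : K} {p p' : NetPath K a o} {q q' : NetPath K o e} :
      PathHomotopic K p p' → PathHomotopic K q q' → PathHomotopic K (p.comp q) (p'.comp q')
  | decomp {s s₁ s₂ x y z : K} (hz : z ≤ s) (hx : x ≤ s)
      (hy1 : y ≤ s₁) (hx1 : x ≤ s₁) (hz2 : z ≤ s₂) (hy2 : y ≤ s₂)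
      (hs1 : s₁ ≤ s) (hs2 : s₂ ≤ s) :
      PathHomotopic K (NetPath.single ⟨s, z, x, hz, hx⟩)
        ((NetPath.single ⟨s₁, y, x, hy1, hx1⟩).comp (NetPath.single ⟨s₂, z, y, hz2, hy2⟩))
  | cancel (b : PosetSimplex K) :
      PathHomotopic K ((NetPath.single b).comp (NetPath.single b.op)) (.nil b.f1)

section Eval

variable {K : Type*} [PartialOrder K] (A : K → Type*)
  [∀ a, Ring (A a)] [∀ a, StarRing (A a)] [∀ a, Algebra ℂ (A a)]
  (j : ∀ ⦃a a' : K⦄, a ≤ a' → (A a ≃⋆ₐ[ℂ] A a'))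

/-- Evaluation of a 1-simplex in a C*-net bundle: `j_b := j_{∂₀b,|b|} ∘ j_{|b|,∂₁b}⁻¹`
read as a *-isomorphism `A_{∂₁b} → A_{∂₀b}`. -/
def simplexEval (b : PosetSimplex K) : A b.f1 ≃⋆ₐ[ℂ] A b.f0 :=
  (j b.h1).trans (j b.h0).symm

/-- Evaluation of a path in a C*-net bundle, composing the simplex evaluations. -/
def pathEval : ∀ {a o : K}, NetPath K a o → (A a ≃⋆ₐ[ℂ] A o)
  | _, _, .nil _ => StarAlgEquiv.refl ℂ _
  | _, _, .cons p b h => (pathEval p).trans (h ▸ simplexEval A j b)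

end Eval

/-- The loop `g_{o'o} = [p_{ao'} * (o';o',o) * p_{oa}]` attached to an inclusion `o ≤ o'`
by a path frame `P`. -/
def frameLoop {K : Type*} [PartialOrder K] {a : K} (P : ∀ o : K, NetPath K a o)
    {o o' : K} (h : o ≤ o') : NetPath K a a :=
  ((P o).comp (NetPath.single ⟨o', o', o, le_refl o', h⟩)).comp (P o').reverse


section Aux

variable {K : Type*} [PartialOrder K] (A : K → Type*)
  [∀ a, Ring (A a)] [∀ a, StarRing (A a)] [∀ a, Algebra ℂ (A a)]
  (j : ∀ ⦃a a' : K⦄, a ≤ a' → (A a ≃⋆ₐ[ℂ] A a'))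

theorem refl_apply' {x : K} (t : A x) : (StarAlgEquiv.refl ℂ (A x) : A x ≃⋆ₐ[ℂ] A x) t = t := rfl

theorem pathEval_comp {x y z : K} (p : NetPath K x y) (q : NetPath K y z) :
    pathEval A j (p.comp q) = (pathEval A j p).trans (pathEval A j q) := by
  induction q with
  | nil =>
      apply StarAlgEquiv.ext; intro t
      simp [NetPath.comp, pathEval, StarAlgEquiv.trans_apply, refl_apply']
  | cons q b h ih =>
      subst h
      apply StarAlgEquiv.ext; intro t
      simp only [NetPath.comp, pathEval, StarAlgEquiv.trans_apply, ih]

theorem pathEval_reverse {x y : K} (p : NetPath K x y) :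
    pathEval A j p.reverse = (pathEval A j p).symm := by
  induction p with
  | nil =>
      apply StarAlgEquiv.ext; intro t
      simp [NetPath.reverse, pathEval]
  | cons p b h ih =>
      subst h
      apply StarAlgEquiv.ext; intro t
      simp only [NetPath.reverse, pathEval_comp, ih,
        pathEval, NetPath.single, StarAlgEquiv.trans_apply, simplexEval,
        PosetSimplex.op, refl_apply', StarAlgEquiv.symm_trans_apply,
        StarAlgEquiv.symm_symm]

variable (hj : ∀ ⦃a a' a'' : K⦄ (h : a ≤ a') (h' : a' ≤ a''),
      j (h.trans h') = (j h).trans (j h'))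

include hj

theorem j_refl_apply {x : K} (t : A x) : j (le_refl x) t = t := by
  have h : j (le_refl x) = (j (le_refl x)).trans (j (le_refl x)) :=
    hj (le_refl x) (le_refl x)
  have h2 : j (le_refl x) t = j (le_refl x) (j (le_refl x) t) := by
    conv_lhs => rw [h]
    rfl
  have h3 := congrArg (j (le_refl x)).symm h2
  simpa using h3.symm

theorem pathEval_homotopic {x y : K} {p q : NetPath K x y}
    (h : PathHomotopic K p q) : pathEval A j p = pathEval A j q := by
  induction h with
  | refl p => rfl
  | symm _ ih => exact ih.symm
  | trans _ _ ih1 ih2 => exact ih1.trans ih2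
  | comp _ _ ih1 ih2 => rw [pathEval_comp, pathEval_comp, ih1, ih2]
  | decomp hz hx hy1 hx1 hz2 hy2 hs1 hs2 =>
      rename_i s s₁ s₂ xx yy zz
      apply StarAlgEquiv.ext; intro t
      rw [pathEval_comp]
      simp only [pathEval, NetPath.single, simplexEval, StarAlgEquiv.trans_apply,
        refl_apply']
      set v : A yy := (j hy1).symm (j hx1 t) with hv
      have key : j hz ((j hz2).symm (j hy2 v)) = j hx t := by
        have e1 : j hz ((j hz2).symm (j hy2 v)) = j hs2 (j hy2 v) := by
          rw [show (hz : zz ≤ s) = hz2.trans hs2 from rfl, hj hz2 hs2,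
            StarAlgEquiv.trans_apply, (j hz2).apply_symm_apply]
        have e2 : j hs2 (j hy2 v) = j (hy2.trans hs2) v := by
          rw [hj hy2 hs2]; rfl
        have e3 : j (hy1.trans hs1) v = j hs1 (j hy1 v) := by
          rw [hj hy1 hs1]; rfl
        have e4 : (hy2.trans hs2 : yy ≤ s) = hy1.trans hs1 := rfl
        have e5 : j hx t = j hs1 (j hx1 t) := by
          rw [show (hx : xx ≤ s) = hx1.trans hs1 from rfl, hj hx1 hs1]; rfl
        rw [e1, e2, e4, e3, hv, (j hy1).apply_symm_apply, ← e5]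
      have h3 := congrArg (j hz).symm key
      rw [(j hz).symm_apply_apply] at h3
      exact h3.symm
  | cancel b =>
      apply StarAlgEquiv.ext; intro t
      erw [pathEval_comp]
      simp [pathEval, NetPath.single, simplexEval, PosetSimplex.op,
        StarAlgEquiv.trans_apply, refl_apply']
      erw [pathEval.eq_2]
      simp [pathEval, simplexEval, StarAlgEquiv.trans_apply, refl_apply']
      change (j b.h1).symm (j b.h0 ((j b.h0).symm (j b.h1 t))) = t
      simp

end Aux

/-- If `K` is a simply connected pathwise connected poset, then every
C*-net bundle `(A, j)` over `K` is trivial: it is isomorphic to the constant net bundle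
with fibre `A_a`, via isomorphisms given by parallel transport along paths. -/
theorem simplyConnected_netBundle_trivial {K : Type*} [PartialOrder K]
    (hconn : ∀ a o : K, Nonempty (NetPath K a o))
    (hsc : ∀ (x : K) (p : NetPath K x x), PathHomotopic K p (.nil x))
    (A : K → Type*) [∀ a, Ring (A a)] [∀ a, StarRing (A a)] [∀ a, Algebra ℂ (A a)]
    (j : ∀ ⦃a a' : K⦄, a ≤ a' → (A a ≃⋆ₐ[ℂ] A a'))
    (hj : ∀ ⦃a a' a'' : K⦄ (h : a ≤ a') (h' : a' ≤ a''),
      j (h.trans h') = (j h).trans (j h'))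
    (a : K) :
    ∃ φ : ∀ o, A o ≃⋆ₐ[ℂ] A a,
      (∀ o, ∃ p : NetPath K o a, φ o = pathEval A j p) ∧
      (∀ ⦃o o' : K⦄ (h : o ≤ o') (t : A o), φ o' (j h t) = φ o t) := by
  have indep : ∀ {o : K} (p q : NetPath K o a),
      pathEval A j p = pathEval A j q := by
    intro o p q
    have hl := pathEval_homotopic A j hj (hsc o (p.comp q.reverse))
    rw [pathEval_comp, pathEval_reverse] at hl
    apply StarAlgEquiv.ext; intro t
    have h1 : (pathEval A j q).symm (pathEval A j p t) = t := by
      have := congrArg (fun e : A o ≃⋆ₐ[ℂ] A o => e t) hl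
      simpa [StarAlgEquiv.trans_apply, pathEval, refl_apply'] using this
    have := congrArg (pathEval A j q) h1
    rwa [(pathEval A j q).apply_symm_apply] at this
  have jre : ∀ {x : K} (t : A x), (j (le_refl x)).symm t = t := by
    intro x t
    have h1 : j (le_refl x) ((j (le_refl x)).symm t) = t :=
      (j (le_refl x)).apply_symm_apply t
    rw [j_refl_apply A j hj] at h1
    exact h1
  refine ⟨fun o => pathEval A j (hconn o a).some, fun o => ⟨_, rfl⟩, ?_⟩
  intro o o' h t
  show pathEval A j (hconn o' a).some ((j h) t) = pathEval A j (hconn o a).some t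
  have hr := indep (hconn o a).some
    ((NetPath.single ⟨o', o', o, le_refl o', h⟩).comp (hconn o' a).some)
  rw [hr, pathEval_comp]
  simp only [StarAlgEquiv.trans_apply, pathEval, NetPath.single, simplexEval,
    refl_apply', jre]
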